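/- Let λ and ξ be partitions of the same integer n ≥ 2 with λ ⊵ ξ in the dominance order. Then r(λ) ≥ r(ξ). -/

import Mathlib

open Finset

/-- Abel summation identity. -/
lemma abel_identity (A b : ℕ → ℝ) (n : ℕ) :
    ∑ i ∈ Finset.range n, (A (i + 1) - A i) * b i =
      (∑ i ∈ Finset.range n, A (i + 1) * (b i - b (i + 1))) + A n * b n - A 0 * b 0 := by
  induction n with
  | zero => simp
  | succ m ih =>
      rw [Finset.sum_range_succ, Finset.sum_range_succ, ih]
      ring

/-- If partial sums `A` are nonnegative, vanish at `0` and `n`, and `b` is antitone, then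
the Abel sum is nonnegative. -/
lemma abel_nonneg (A b : ℕ → ℝ) (n : ℕ) (h0 : A 0 = 0) (hn : A n = 0)
    (hA : ∀ j, 0 ≤ A j) (hb : ∀ i j : ℕ, i ≤ j → b j ≤ b i) :
    0 ≤ ∑ i ∈ Finset.range n, (A (i + 1) - A i) * b i := by
  rw [abel_identity, hn, h0]
  simp only [zero_mul, sub_zero, add_zero]
  apply Finset.sum_nonneg
  intro i _
  exact mul_nonneg (hA (i + 1)) (by linarith [hb i (i + 1) (Nat.le_succ i)])

/-- Monotonicity of the normalized transposition character in the dominance order: if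
`λ ⊵ ξ` are partitions of `n ≥ 2` (given as antitone functions `f, g : ℕ → ℕ` listing the
parts, supported on `{0, …, n-1}`), then `r(λ) ≥ r(ξ)` where
`r(λ) = (1/(n(n-1))) Σ_i (λ_i² - (2i-1)λ_i)`. -/
theorem normalized_character_monotone_dominance (n : ℕ) (hn : 2 ≤ n) (f g : ℕ → ℕ)
    (hf : Antitone f) (hfsum : ∑ i ∈ Finset.range n, f i = n)
    (hfvanish : ∀ i, n ≤ i → f i = 0)
    (hg : Antitone g) (hgsum : ∑ i ∈ Finset.range n, g i = n)
    (hgvanish : ∀ i, n ≤ i → g i = 0)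
    (hdom : ∀ j : ℕ, ∑ i ∈ Finset.range j, g i ≤ ∑ i ∈ Finset.range j, f i) :
    (1 / ((n : ℝ) * ((n : ℝ) - 1))) *
        ∑ i ∈ Finset.range n, (((g i : ℝ)) ^ 2 - (2 * (i : ℝ) + 1) * (g i : ℝ)) ≤
      (1 / ((n : ℝ) * ((n : ℝ) - 1))) *
        ∑ i ∈ Finset.range n, (((f i : ℝ)) ^ 2 - (2 * (i : ℝ) + 1) * (f i : ℝ)) := by
  have hpos : (0 : ℝ) ≤ 1 / ((n : ℝ) * ((n : ℝ) - 1)) := by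
    have h2 : (2 : ℝ) ≤ (n : ℝ) := by exact_mod_cast hn
    apply div_nonneg zero_le_one
    nlinarith
  apply mul_le_mul_of_nonneg_left _ hpos
  set A : ℕ → ℝ := fun j => ∑ i ∈ Finset.range j, ((f i : ℝ) - (g i : ℝ)) with hAdef
  set b : ℕ → ℝ := fun i => (f i : ℝ) + (g i : ℝ) - (2 * (i : ℝ) + 1) with hbdef
  have key : 0 ≤ ∑ i ∈ Finset.range n, (A (i + 1) - A i) * b i := by
    apply abel_nonneg
    · simp [hAdef]
    · have hf' : (∑ i ∈ Finset.range n, (f i : ℝ)) = n := by exact_mod_cast hfsum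
      have hg' : (∑ i ∈ Finset.range n, (g i : ℝ)) = n := by exact_mod_cast hgsum
      have : A n = (∑ i ∈ Finset.range n, (f i : ℝ)) - ∑ i ∈ Finset.range n, (g i : ℝ) :=
        Finset.sum_sub_distrib _ _
      rw [this, hf', hg', sub_self]
    · intro j
      have := hdom j
      have hcast : (∑ i ∈ Finset.range j, (g i : ℝ)) ≤ ∑ i ∈ Finset.range j, (f i : ℝ) := by
        exact_mod_cast this
      simp only [hAdef, Finset.sum_sub_distrib]
      linarith
    · intro i j hij
      have h1 : (f j : ℝ) ≤ f i := by exact_mod_cast hf hij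
      have h2 : (g j : ℝ) ≤ g i := by exact_mod_cast hg hij
      have h3 : (i : ℝ) ≤ j := by exact_mod_cast hij
      simp only [hbdef]
      linarith
  have eqterm : ∀ i ∈ Finset.range n, (A (i + 1) - A i) * b i =
      (((f i : ℝ)) ^ 2 - (2 * (i : ℝ) + 1) * (f i : ℝ)) -
      (((g i : ℝ)) ^ 2 - (2 * (i : ℝ) + 1) * (g i : ℝ)) := by
    intro i _
    have : A (i + 1) - A i = (f i : ℝ) - (g i : ℝ) := by
      simp only [hAdef, Finset.sum_range_succ]
      ring
    rw [this, hbdef]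
    ring
  rw [Finset.sum_congr rfl eqterm, Finset.sum_sub_distrib] at key
  linarith
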